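/- Suppose a monic Laurent series h evolves by the KP equations ∂h/∂t_j = ∂_x H^{(j)}, where H^{(j)} are the currents. Then the operator ∂/∂t_j + H^{(j)} preserves the span H₊ of the Faà di Bruno iterates: (∂/∂t_j + H^{(j)})(H₊) ⊆ H₊. -/

import Mathlib

/- Formal Laurent series in `z⁻¹` are modelled as Hahn series in `ζ = z⁻¹`:
the coefficient of `z^m` is the coefficient at index `-m`.  The coefficient
ring `R` consists of functions of `x` and the times `t_j`; it carries commuting
derivations `d = ∂_x` and `dT j = ∂/∂t_j`, all acting coefficientwise on
Laurent series. -/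

variable {R : Type*} [CommRing R]

/-- Coefficientwise action of a derivation on Laurent series. -/
noncomputable def liftD (d : R →+ R) (f : HahnSeries ℤ R) : HahnSeries ℤ R where
  coeff n := d (f.coeff n)
  isPWO_support' := f.isPWO_support'.mono (by
    intro n hn
    simp only [Function.mem_support] at hn ⊢
    intro h0
    exact hn (by rw [h0, map_zero]))

/-- Faà di Bruno iterates: `h⁽⁰⁾ = 1`, `h⁽ʲ⁺¹⁾ = (∂_x + h)·h⁽ʲ⁾`. -/
noncomputable def fdb (d : R →+ R) (h : HahnSeries ℤ R) : ℕ → HahnSeries ℤ R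
  | 0 => 1
  | j + 1 => liftD d (fdb d h j) + h * fdb d h j

@[simp] lemma liftD_coeff (d : R →+ R) (f : HahnSeries ℤ R) (n : ℤ) :
    (liftD d f).coeff n = d (f.coeff n) := rfl

lemma liftD_support_subset (d : R →+ R) (f : HahnSeries ℤ R) :
    (liftD d f).support ⊆ f.support := by
  intro n hn
  simp only [HahnSeries.mem_support, liftD_coeff] at hn ⊢
  intro h0; exact hn (by rw [h0, map_zero])

lemma liftD_zero (d : R →+ R) : liftD d (0 : HahnSeries ℤ R) = 0 := by
  ext n; simp

lemma liftD_add (d : R →+ R) (f g : HahnSeries ℤ R) :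
    liftD d (f + g) = liftD d f + liftD d g := by
  ext n; simp

lemma liftD_smul (d : R →+ R) (hd : ∀ a b : R, d (a * b) = d a * b + a * d b)
    (c : R) (f : HahnSeries ℤ R) :
    liftD d (c • f) = d c • f + c • liftD d f := by
  ext n
  simp [HahnSeries.coeff_smul, smul_eq_mul, hd]

lemma liftD_mul (d : R →+ R) (hd : ∀ a b : R, d (a * b) = d a * b + a * d b)
    (f g : HahnSeries ℤ R) :
    liftD d (f * g) = liftD d f * g + f * liftD d g := by
  ext n
  have h1 : (liftD d f * g).coeff n =
      ∑ ij ∈ Finset.antidiagonal f.isPWO_support g.isPWO_support n,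
        d (f.coeff ij.1) * g.coeff ij.2 :=
    HahnSeries.coeff_mul_left' f.isPWO_support (liftD_support_subset d f)
  have h2 : (f * liftD d g).coeff n =
      ∑ ij ∈ Finset.antidiagonal f.isPWO_support g.isPWO_support n,
        f.coeff ij.1 * d (g.coeff ij.2) :=
    HahnSeries.coeff_mul_right' g.isPWO_support (liftD_support_subset d g)
  simp only [HahnSeries.coeff_add, liftD_coeff, HahnSeries.coeff_mul, map_sum, hd,
    h1, h2, Finset.sum_add_distrib]

lemma liftD_one (d : R →+ R) (hd : ∀ a b : R, d (a * b) = d a * b + a * d b) :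
    liftD d (1 : HahnSeries ℤ R) = 0 := by
  have h1 : d 1 = 0 := by
    have := hd 1 1
    rw [one_mul, mul_one, one_mul] at this
    have h2 : d 1 + 0 = d 1 + d 1 := by rw [add_zero]; exact this
    exact (add_left_cancel h2).symm
  ext n
  simp only [liftD_coeff, HahnSeries.coeff_zero, HahnSeries.coeff_one]
  split <;> simp_all [map_zero]

/-- if the monic Laurent series `h` evolves by the KP equations
`∂h/∂t_j = ∂_x H⁽ʲ⁾`, where the currents `H⁽ʲ⁾ ∈ H₊` have the expansion
`z^j + O(z^{-1})`, then each operator `∂/∂t_j + H⁽ʲ⁾` preserves the span `H₊`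
of the Faà di Bruno iterates of `h`. -/
theorem kp_invariance (d : R →+ R) (dT : ℕ → R →+ R)
    (hd : ∀ a b : R, d (a * b) = d a * b + a * d b)
    (hdT : ∀ j, ∀ a b : R, dT j (a * b) = dT j a * b + a * dT j b)
    (hcomm : ∀ j a, dT j (d a) = d (dT j a))
    (h : HahnSeries ℤ R)
    (h_monic : h.coeff (-1) = 1 ∧ h.coeff 0 = 0 ∧ ∀ n : ℤ, n < -1 → h.coeff n = 0)
    (H : ℕ → HahnSeries ℤ R)
    (hHmem : ∀ j, H j ∈ Submodule.span R (Set.range (fdb d h)))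
    (hHshape : ∀ j, (H j).coeff (-(j : ℤ)) = 1 ∧
      (∀ n : ℤ, n < -(j : ℤ) → (H j).coeff n = 0) ∧
      (∀ n : ℤ, -(j : ℤ) < n → n ≤ 0 → (H j).coeff n = 0))
    (hKP : ∀ j, liftD (dT j) h = liftD d (H j)) :
    ∀ j, ∀ f ∈ Submodule.span R (Set.range (fdb d h)),
      liftD (dT j) f + H j * f ∈ Submodule.span R (Set.range (fdb d h)) := by
  intro j
  set S := Submodule.span R (Set.range (fdb d h)) with hS
  -- The operator A f = ∂f + h·f preserves the span S.
  have hA_span : ∀ f ∈ S, liftD d f + h * f ∈ S := by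
    intro f hf
    induction hf using Submodule.span_induction with
    | mem x hx =>
      obtain ⟨k, rfl⟩ := hx
      exact Submodule.subset_span ⟨k + 1, rfl⟩
    | zero => simp [liftD_zero]
    | add x y hx hy ihx ihy =>
      have : liftD d (x + y) + h * (x + y) =
          (liftD d x + h * x) + (liftD d y + h * y) := by
        rw [liftD_add]; ring
      rw [this]; exact add_mem ihx ihy
    | smul c x hx ihx =>
      have : liftD d (c • x) + h * (c • x) =
          c • (liftD d x + h * x) + d c • x := by
        rw [liftD_smul d hd, smul_add, ← HahnSeries.C_mul_eq_smul,
          ← HahnSeries.C_mul_eq_smul, ← HahnSeries.C_mul_eq_smul,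
          ← HahnSeries.C_mul_eq_smul]
        ring
      rw [this]
      exact add_mem (Submodule.smul_mem _ _ ihx) (Submodule.smul_mem _ _ hx)
  -- The operators A and B = ∂_{t_j} + H_j commute, by the KP equation.
  have hcommute : ∀ f : HahnSeries ℤ R,
      liftD (dT j) (liftD d f + h * f) + H j * (liftD d f + h * f) =
      liftD d (liftD (dT j) f + H j * f) + h * (liftD (dT j) f + H j * f) := by
    intro f
    have hdd : liftD (dT j) (liftD d f) = liftD d (liftD (dT j) f) := by
      ext n; exact hcomm j _
    rw [liftD_add, liftD_add, liftD_mul d hd, liftD_mul (dT j) (hdT j), hKP j, hdd]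
    ring
  -- B sends each Faà di Bruno iterate into S.
  have hBfdb : ∀ k : ℕ, liftD (dT j) (fdb d h k) + H j * fdb d h k ∈ S := by
    intro k
    induction k with
    | zero =>
      have : liftD (dT j) (fdb d h 0) + H j * fdb d h 0 = H j := by
        show liftD (dT j) 1 + H j * 1 = H j
        rw [liftD_one (dT j) (hdT j), mul_one, zero_add]
      rw [this]; exact hHmem j
    | succ k ih =>
      have : liftD (dT j) (fdb d h (k + 1)) + H j * fdb d h (k + 1) =
          liftD d (liftD (dT j) (fdb d h k) + H j * fdb d h k) +
            h * (liftD (dT j) (fdb d h k) + H j * fdb d h k) := by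
        show liftD (dT j) (liftD d (fdb d h k) + h * fdb d h k) +
            H j * (liftD d (fdb d h k) + h * fdb d h k) = _
        exact hcommute (fdb d h k)
      rw [this]
      exact hA_span _ ih
  -- Conclude by span induction.
  intro f hf
  induction hf using Submodule.span_induction with
  | mem x hx => obtain ⟨k, rfl⟩ := hx; exact hBfdb k
  | zero => simp [liftD_zero]
  | add x y hx hy ihx ihy =>
    have : liftD (dT j) (x + y) + H j * (x + y) =
        (liftD (dT j) x + H j * x) + (liftD (dT j) y + H j * y) := by
      rw [liftD_add]; ring
    rw [this]; exact add_mem ihx ihy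
  | smul c x hx ihx =>
    have : liftD (dT j) (c • x) + H j * (c • x) =
        c • (liftD (dT j) x + H j * x) + dT j c • x := by
      rw [liftD_smul (dT j) (hdT j), smul_add, ← HahnSeries.C_mul_eq_smul,
        ← HahnSeries.C_mul_eq_smul, ← HahnSeries.C_mul_eq_smul,
        ← HahnSeries.C_mul_eq_smul]
      ring
    rw [this]
    exact add_mem (Submodule.smul_mem _ _ ihx) (Submodule.smul_mem _ _ hx)
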